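/- Let d ≥ 1, m ≠ 0, λ ≥ 0, and let h : ℝ^d × (0,∞) → ℝ be measurable with h(q;k) ≥ m² + ‖q‖² for all q and k. Define the update (Th)(p;k) = m² + ‖p‖² + (1/(2(2π)^d)) ∫_k^∞ ∫_{ℝ^d} [∂_{k'} r̄(q;k') / (h(q;k') + r̄(q;k'))²] · κ₄(p,−q,q;k') dq dk'. Then all integrals converge and for all p ∈ ℝ^d and k > 0: m² + ‖p‖² ≤ (Th)(p;k) ≤ m² + ‖p‖² + t_d · λ · m². -/

import Mathlib

open MeasureTheory

open Classical in
/-- The exponential regulator `r̄(q;k) = ‖q‖²/(exp(‖q‖²/k²) − 1)`, extended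
continuously by `r̄(0;k) = k²`. -/
noncomputable def rbar (d : ℕ) (q : EuclideanSpace ℝ (Fin d)) (k : ℝ) : ℝ :=
  if q = 0 then k ^ 2 else ‖q‖ ^ 2 / (Real.exp (‖q‖ ^ 2 / k ^ 2) - 1)

/-- The four-point function ansatz
`κ₄(p,q,r;k) = λ|m|^{4−d} exp[−(‖p‖^d + ‖q‖^d + ‖r‖^d + ‖p+q+r‖^d + |m|^d)/(k|m|^{d−1})]`. -/
noncomputable def kappa4 (d : ℕ) (m lam : ℝ) (p q r : EuclideanSpace ℝ (Fin d)) (k : ℝ) : ℝ :=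
  lam * |m| ^ ((4 : ℤ) - (d : ℤ)) *
    Real.exp (-((‖p‖ ^ d + ‖q‖ ^ d + ‖r‖ ^ d + ‖p + q + r‖ ^ d + |m| ^ d)
      / (k * |m| ^ ((d : ℤ) - 1))))

/-- The surface area `s_{d−1} = 2π^{d/2}/Γ(d/2)` of the unit `(d−1)`-sphere. -/
noncomputable def sSphere (d : ℕ) : ℝ :=
  2 * Real.pi ^ ((d : ℝ) / 2) / Real.Gamma ((d : ℝ) / 2)

/-- The constant `t_d = (2π)^{−d} π s_{d−1}/(8d)`. -/
noncomputable def tConst (d : ℕ) : ℝ :=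
  (2 * Real.pi) ^ (-(d : ℤ)) * Real.pi * sSphere d / (8 * d)

/-- The update map `(Th)(p;k) = m² + ‖p‖² + (1/(2(2π)^d)) ∫_k^∞ ∫_{ℝ^d}
[∂_{k'} r̄(q;k') / (h(q;k') + r̄(q;k'))²] · κ₄(p,−q,q;k') dq dk'`. -/
noncomputable def Tmap (d : ℕ) (m lam : ℝ) (h : EuclideanSpace ℝ (Fin d) → ℝ → ℝ)
    (p : EuclideanSpace ℝ (Fin d)) (k : ℝ) : ℝ :=
  m ^ 2 + ‖p‖ ^ 2 + (1 / (2 * (2 * Real.pi) ^ d)) *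
    ∫ k' in Set.Ioi k, ∫ q,
      (deriv (fun s => rbar d q s) k' / (h q k' + rbar d q k') ^ 2) *
        kappa4 d m lam p (-q) q k'

open Classical in
noncomputable def Dr (d : ℕ) (q : EuclideanSpace ℝ (Fin d)) (k : ℝ) : ℝ :=
  if q = 0 then 2 * k else
    2 * ‖q‖ ^ 4 * Real.exp (‖q‖ ^ 2 / k ^ 2) / (k ^ 3 * (Real.exp (‖q‖ ^ 2 / k ^ 2) - 1) ^ 2)

lemma exp_sub_exp_neg (t : ℝ) (ht : 0 ≤ t) : 2 * t ≤ Real.exp t - Real.exp (-t) := by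
  have key : ∀ x : ℝ, HasDerivAt (fun s => Real.exp s - Real.exp (-s) - 2 * s)
      (Real.exp x + Real.exp (-x) - 2) x := by
    intro x
    have h1 := Real.hasDerivAt_exp x
    have h2 : HasDerivAt (fun s : ℝ => Real.exp (-s)) (-Real.exp (-x)) x := by
      have := (Real.hasDerivAt_exp (-x)).comp x (hasDerivAt_neg x)
      simp at this
      exact this
    have h3 : HasDerivAt (fun s : ℝ => 2 * s) 2 x := by
      simpa using (hasDerivAt_id x).const_mul (2 : ℝ)
    refine ((h1.sub h2).sub h3).congr_deriv ?_; ring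
  have mono : MonotoneOn (fun s => Real.exp s - Real.exp (-s) - 2 * s) (Set.Ici 0) := by
    apply monotoneOn_of_hasDerivWithinAt_nonneg (convex_Ici 0)
      (Continuous.continuousOn (by continuity))
      (fun x _ => (key x).hasDerivWithinAt)
    intro x _
    have hx := Real.exp_pos x
    have : Real.exp (-x) = (Real.exp x)⁻¹ := Real.exp_neg x
    rw [this]
    have h4 : (Real.exp x - 1) ^ 2 ≥ 0 := sq_nonneg _
    rw [ge_iff_le, ← sub_nonneg] at *
    have h5 : Real.exp x * (Real.exp x)⁻¹ = 1 := mul_inv_cancel₀ (Real.exp_pos x).ne'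
    nlinarith
  have := mono (Set.self_mem_Ici) ht ht
  simp at this
  linarith

lemma hasDerivAt_rbar (d : ℕ) (q : EuclideanSpace ℝ (Fin d)) (k : ℝ) (hk : 0 < k) :
    HasDerivAt (fun s => rbar d q s) (Dr d q k) k := by
  by_cases hq : q = 0
  · simp only [rbar, Dr, hq, if_true]
    simpa using hasDerivAt_pow 2 k
  · simp only [rbar, Dr, hq, if_false]
    have hqn : 0 < ‖q‖ := norm_pos_iff.mpr hq
    have hx : 0 < ‖q‖ ^ 2 / k ^ 2 := by positivity
    have hden : Real.exp (‖q‖ ^ 2 / k ^ 2) - 1 > 0 := by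
      have : (1:ℝ) = Real.exp 0 := Real.exp_zero.symm
      rw [this, gt_iff_lt, sub_pos]
      exact Real.exp_lt_exp.mpr hx
    -- derivative of s ↦ ‖q‖^2 / s^2 at k
    have hg : HasDerivAt (fun s : ℝ => ‖q‖ ^ 2 / s ^ 2) (-(2 * ‖q‖ ^ 2) / k ^ 3) k := by
      have h1 : HasDerivAt (fun s : ℝ => s ^ 2) (2 * k) k := by simpa using hasDerivAt_pow 2 k
      have := (hasDerivAt_const k (‖q‖ ^ 2)).div h1 (by positivity)
      refine this.congr_deriv ?_
      field_simp
      ring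
    have he : HasDerivAt (fun s : ℝ => Real.exp (‖q‖ ^ 2 / s ^ 2) - 1)
        (Real.exp (‖q‖ ^ 2 / k ^ 2) * (-(2 * ‖q‖ ^ 2) / k ^ 3)) k :=
      ((Real.hasDerivAt_exp _).comp k hg).sub_const 1
    have := (hasDerivAt_const k (‖q‖ ^ 2)).div he (by linarith)
    refine this.congr_deriv ?_
    field_simp
    ring

lemma deriv_rbar (d : ℕ) (q : EuclideanSpace ℝ (Fin d)) (k : ℝ) (hk : 0 < k) :
    deriv (fun s => rbar d q s) k = Dr d q k :=
  (hasDerivAt_rbar d q k hk).deriv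

lemma exp_denom_pos {x : ℝ} (hx : 0 < x) : 0 < Real.exp x - 1 := by
  have : (1:ℝ) = Real.exp 0 := Real.exp_zero.symm
  rw [this, sub_pos]
  exact Real.exp_lt_exp.mpr hx

lemma Dr_nonneg (d : ℕ) (q : EuclideanSpace ℝ (Fin d)) (k : ℝ) (hk : 0 < k) :
    0 ≤ Dr d q k := by
  unfold Dr
  split
  · linarith
  · have hqn : 0 < ‖q‖ := norm_pos_iff.mpr (by assumption)
    have hden := exp_denom_pos (show 0 < ‖q‖ ^ 2 / k ^ 2 by positivity)
    positivity

lemma Dr_le (d : ℕ) (q : EuclideanSpace ℝ (Fin d)) (k : ℝ) (hk : 0 < k) :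
    Dr d q k ≤ 2 * k := by
  unfold Dr
  split
  · exact le_refl _
  · have hqn : 0 < ‖q‖ := norm_pos_iff.mpr (by assumption)
    set x : ℝ := ‖q‖ ^ 2 / k ^ 2 with hxdef
    have hx : 0 < x := by positivity
    have hden := exp_denom_pos hx
    -- key: x^2 * exp x ≤ (exp x - 1)^2
    have key : x ^ 2 * Real.exp x ≤ (Real.exp x - 1) ^ 2 := by
      have h1 := exp_sub_exp_neg (x / 2) (by linarith)
      -- exp x - 1 = exp(x/2) * (exp(x/2) - exp(-x/2)) ≥ exp(x/2) * x
      have h2 : Real.exp x - 1 = Real.exp (x / 2) * (Real.exp (x / 2) - Real.exp (-(x / 2))) := by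
        rw [mul_sub, ← Real.exp_add, ← Real.exp_add]
        norm_num
      have h3 : Real.exp (x / 2) * x ≤ Real.exp x - 1 := by
        rw [h2]
        have := Real.exp_pos (x / 2)
        nlinarith
      have h4 : (Real.exp (x / 2)) ^ 2 = Real.exp x := by
        rw [sq, ← Real.exp_add]
        norm_num
      have h5 : (Real.exp (x / 2) * x) * (Real.exp (x / 2) * x)
          ≤ (Real.exp x - 1) * (Real.exp x - 1) :=
        mul_le_mul h3 h3 (by positivity) hden.le
      nlinarith [h5, h4]
    -- goal: 2 * ‖q‖^4 * exp x / (k^3 * (exp x - 1)^2) ≤ 2 * k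
    rw [div_le_iff₀ (by positivity)]
    have hq4 : ‖q‖ ^ 4 = x ^ 2 * k ^ 4 := by
      rw [hxdef]; field_simp
    calc 2 * ‖q‖ ^ 4 * Real.exp x = 2 * k ^ 4 * (x ^ 2 * Real.exp x) := by rw [hq4]; ring
    _ ≤ 2 * k ^ 4 * (Real.exp x - 1) ^ 2 := by nlinarith [pow_pos hk 4]
    _ = 2 * k * (k ^ 3 * (Real.exp x - 1) ^ 2) := by ring

lemma rbar_nonneg (d : ℕ) (q : EuclideanSpace ℝ (Fin d)) (k : ℝ) (hk : 0 < k) :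
    0 ≤ rbar d q k := by
  unfold rbar
  split
  · positivity
  · have hqn : 0 < ‖q‖ := norm_pos_iff.mpr (by assumption)
    have hden := exp_denom_pos (show 0 < ‖q‖ ^ 2 / k ^ 2 by positivity)
    positivity

lemma rbar_add_sq (d : ℕ) (q : EuclideanSpace ℝ (Fin d)) (k : ℝ) (hk : 0 < k) :
    k ^ 2 ≤ rbar d q k + ‖q‖ ^ 2 := by
  unfold rbar
  split
  · simp
  · have hqn : 0 < ‖q‖ := norm_pos_iff.mpr (by assumption)
    set x : ℝ := ‖q‖ ^ 2 / k ^ 2 with hxdef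
    have hx : 0 < x := by positivity
    have hden := exp_denom_pos hx
    -- e^x - 1 ≤ x e^x  from 1 - x ≤ e^{-x}
    have h1 : Real.exp x - 1 ≤ x * Real.exp x := by
      have := Real.add_one_le_exp (-x)
      have hpos := Real.exp_pos x
      have hinv : Real.exp (-x) = (Real.exp x)⁻¹ := Real.exp_neg x
      rw [hinv] at this
      nlinarith [mul_inv_cancel₀ hpos.ne']
    have hq2 : ‖q‖ ^ 2 = x * k ^ 2 := by rw [hxdef]; field_simp
    rw [hq2, ← sub_nonneg]
    have heq : x * k ^ 2 / (Real.exp x - 1) + x * k ^ 2 - k ^ 2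
        = k ^ 2 * ((x * Real.exp x - (Real.exp x - 1)) / (Real.exp x - 1)) := by
      field_simp
      ring
    rw [heq]
    exact mul_nonneg (sq_nonneg k) (div_nonneg (by linarith) hden.le)

lemma sSphere_pos {d : ℕ} (hd : 1 ≤ d) : 0 < sSphere d := by
  unfold sSphere
  have h1 : 0 < (d : ℝ) / 2 := by positivity
  have := Real.Gamma_pos_of_pos h1
  positivity

-- pointwise bound for integrability of exp(-b ‖q‖^d)
lemma exp_pow_bound (d : ℕ) (hd : 1 ≤ d) (b : ℝ) (hb : 0 < b) (r : ℝ) (hr : 0 ≤ r) :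
    Real.exp (-(b * r ^ d)) ≤ (2 ^ (d + 1) * (2 + 2 / b ^ 2)) * (1 + r) ^ (-(d + 1 : ℝ)) := by
  set t : ℝ := b * r ^ d with htdef
  have ht : 0 ≤ t := by positivity
  have h1r : (0:ℝ) < 1 + r := by linarith
  have hrp : (1 + r) ^ (-(d + 1 : ℝ)) = ((1 + r) ^ (d + 1) : ℝ)⁻¹ := by
    rw [← Real.rpow_natCast (1 + r) (d + 1), ← Real.rpow_neg h1r.le]
    push_cast
    ring_nf
  rw [hrp, Real.exp_neg, inv_eq_one_div, inv_eq_one_div, mul_one_div,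
    div_le_div_iff₀ (Real.exp_pos t) (by positivity)]
  -- goal: 1 * (1+r)^(d+1) ≤ 2^(d+1) * (2 + 2/b^2) * exp t
  have h1 : (1 + r) ^ (d + 1) ≤ 2 ^ (d + 1) * (1 + r ^ (d + 1)) := by
    rcases le_total r 1 with hc | hc
    · have : (1 + r) ^ (d + 1) ≤ 2 ^ (d + 1) :=
        pow_le_pow_left₀ (by linarith) (by linarith) _
      nlinarith [pow_nonneg hr (d + 1), pow_pos (show (0:ℝ) < 2 by norm_num) (d + 1)]
    · have : (1 + r) ^ (d + 1) ≤ (2 * r) ^ (d + 1) :=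
        pow_le_pow_left₀ (by linarith) (by linarith) _
      rw [mul_pow] at this
      nlinarith [pow_pos (show (0:ℝ) < 2 by norm_num) (d + 1),
        pow_nonneg hr (d + 1)]
  have h2 : r ^ (d + 1) ≤ 1 + (r ^ d) ^ 2 := by
    rcases le_total r 1 with hc | hc
    · have : r ^ (d + 1) ≤ 1 := pow_le_one₀ hr hc
      nlinarith [sq_nonneg (r ^ d)]
    · have : r ^ (d + 1) ≤ r ^ (2 * d) := pow_le_pow_right₀ hc (by omega)
      have h2d : r ^ (2 * d) = (r ^ d) ^ 2 := by rw [← pow_mul]; ring_nf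
      nlinarith
  have h3 : t ^ 2 / 2 ≤ Real.exp t := by
    have := Real.quadratic_le_exp_of_nonneg ht
    linarith
  have h4 : (1:ℝ) ≤ Real.exp t := Real.one_le_exp ht
  have h5 : (r ^ d) ^ 2 = t ^ 2 / b ^ 2 := by
    rw [htdef]; field_simp
  have h6 : (0:ℝ) < 2 ^ (d + 1) := by positivity
  have h7 : 0 ≤ t ^ 2 / 2 := by positivity
  have h8 : (0:ℝ) < 1 / b ^ 2 := by positivity
  calc 1 * (1 + r) ^ (d + 1) ≤ 2 ^ (d + 1) * (1 + r ^ (d + 1)) := by linarith [h1]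
  _ ≤ 2 ^ (d + 1) * (2 + t ^ 2 / b ^ 2) := by nlinarith
  _ = 2 ^ (d + 1) * (2 + (2 / b ^ 2) * (t ^ 2 / 2)) := by ring
  _ ≤ 2 ^ (d + 1) * (2 * Real.exp t + (2 / b ^ 2) * Real.exp t) := by
    have h9 : (0:ℝ) ≤ 2 / b ^ 2 := by positivity
    have h10 := mul_le_mul_of_nonneg_left h3 h9
    nlinarith [h6]
  _ = 2 ^ (d + 1) * (2 + 2 / b ^ 2) * Real.exp t := by ring

lemma integrable_exp_neg_norm_pow (d : ℕ) (hd : 1 ≤ d) (b : ℝ) (hb : 0 < b) :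
    Integrable (fun q : EuclideanSpace ℝ (Fin d) => Real.exp (-(b * ‖q‖ ^ d))) := by
  have hfin : (Module.finrank ℝ (EuclideanSpace ℝ (Fin d)) : ℝ) < (d + 1 : ℝ) := by
    rw [finrank_euclideanSpace_fin]
    norm_num
  have hint := (integrable_one_add_norm (E := EuclideanSpace ℝ (Fin d)) (μ := volume) hfin).const_mul
    (2 ^ (d + 1) * (2 + 2 / b ^ 2))
  refine hint.mono' ?_ ?_
  · apply Continuous.aestronglyMeasurable
    continuity
  · filter_upwards with q
    rw [Real.norm_eq_abs, abs_of_nonneg (Real.exp_nonneg _)]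
    exact_mod_cast exp_pow_bound d hd b hb ‖q‖ (norm_nonneg q)

lemma hasDerivAt_radial (d : ℕ) (hd : 1 ≤ d) (b : ℝ) (hb : 0 < b) (y : ℝ) :
    HasDerivAt (fun s : ℝ => -Real.exp (-(b * s ^ d)) / (b * d))
      (y ^ (d - 1) * Real.exp (-(b * y ^ d))) y := by
  have h1 : HasDerivAt (fun s : ℝ => -(b * s ^ d)) (-(b * (d * y ^ (d - 1)))) y :=
    (((hasDerivAt_pow d y).const_mul b).neg)
  have h2 := (Real.hasDerivAt_exp _).comp y h1
  have h3 := (h2.neg).div_const (b * d)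
  refine h3.congr_deriv ?_
  field_simp

lemma integrableOn_radial (d : ℕ) (hd : 1 ≤ d) (b : ℝ) (hb : 0 < b) :
    IntegrableOn (fun y : ℝ => y ^ (d - 1) * Real.exp (-(b * y ^ d))) (Set.Ioi 0) := by
  apply integrableOn_Ioi_deriv_of_nonneg' (g := fun s : ℝ => -Real.exp (-(b * s ^ d)) / (b * d))
    (fun y _ => hasDerivAt_radial d hd b hb y)
    (fun y hy => mul_nonneg (pow_nonneg hy.out.le _) (Real.exp_pos _).le)
  -- tendsto
  have h1 : Filter.Tendsto (fun s : ℝ => b * s ^ d) Filter.atTop Filter.atTop :=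
    (Filter.tendsto_pow_atTop (by omega)).const_mul_atTop hb
  have h2 : Filter.Tendsto (fun s : ℝ => Real.exp (-(b * s ^ d))) Filter.atTop (nhds 0) :=
    Real.tendsto_exp_atBot.comp (Filter.tendsto_neg_atBot_iff.mpr h1)
  simpa using (h2.neg).div_const (b * d)

lemma integral_radial (d : ℕ) (hd : 1 ≤ d) (b : ℝ) (hb : 0 < b) :
    ∫ y in Set.Ioi (0:ℝ), y ^ (d - 1) * Real.exp (-(b * y ^ d)) = 1 / (b * d) := by
  have h1 : Filter.Tendsto (fun s : ℝ => b * s ^ d) Filter.atTop Filter.atTop :=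
    (Filter.tendsto_pow_atTop (by omega)).const_mul_atTop hb
  have h2 : Filter.Tendsto (fun s : ℝ => Real.exp (-(b * s ^ d))) Filter.atTop (nhds 0) :=
    Real.tendsto_exp_atBot.comp (Filter.tendsto_neg_atBot_iff.mpr h1)
  have h3 : Filter.Tendsto (fun s : ℝ => -Real.exp (-(b * s ^ d)) / (b * d))
      Filter.atTop (nhds 0) := by simpa using (h2.neg).div_const (b * d)
  rw [integral_Ioi_of_hasDerivAt_of_nonneg' (fun y _ => hasDerivAt_radial d hd b hb y)
    (fun y hy => mul_nonneg (pow_nonneg hy.out.le _) (Real.exp_pos _).le) h3]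
  rw [zero_pow (by omega : d ≠ 0), mul_zero, neg_zero, Real.exp_zero]
  ring

lemma integral_exp_neg_norm_pow_eq (d : ℕ) (hd : 1 ≤ d) (b : ℝ) (hb : 0 < b) :
    ∫ q : EuclideanSpace ℝ (Fin d), Real.exp (-(b * ‖q‖ ^ d)) = sSphere d / (b * d) := by
  haveI : Nonempty (Fin d) := ⟨⟨0, by omega⟩⟩
  haveI : Nontrivial (EuclideanSpace ℝ (Fin d)) :=
    Module.nontrivial_of_finrank_pos (R := ℝ)
      (by rw [finrank_euclideanSpace_fin]; omega)
  have key := MeasureTheory.integral_fun_norm_addHaar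
    (volume : Measure (EuclideanSpace ℝ (Fin d)))
    (fun r : ℝ => Real.exp (-(b * r ^ d)))
  rw [key]
  rw [finrank_euclideanSpace_fin]
  have hball : (volume (Metric.ball (0 : EuclideanSpace ℝ (Fin d)) 1)).toReal =
      Real.pi ^ ((d:ℝ)/2) / Real.Gamma ((d:ℝ)/2 + 1) := by
    rw [EuclideanSpace.volume_ball]
    simp only [Fintype.card_fin, ENNReal.ofReal_one, one_pow, one_mul]
    rw [ENNReal.toReal_ofReal (by positivity)]
    congr 1
    rw [← Real.rpow_natCast (Real.sqrt Real.pi) d, Real.sqrt_eq_rpow, ← Real.rpow_mul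
      Real.pi_pos.le]
    congr 1
    push_cast
    ring
  simp only [smul_eq_mul, nsmul_eq_mul, hball]
  have : ∀ y : ℝ, y ^ (d - 1) * Real.exp (-(b * y ^ d)) =
      y ^ (d - 1) * Real.exp (-(b * y ^ d)) := fun _ => rfl
  rw [show (∫ y in Set.Ioi (0:ℝ), y ^ (d - 1) * Real.exp (-(b * y ^ d))) = 1 / (b * d) from
    integral_radial d hd b hb]
  have hgamma : Real.Gamma ((d:ℝ)/2 + 1) = ((d:ℝ)/2) * Real.Gamma ((d:ℝ)/2) := by
    rw [Real.Gamma_add_one (by positivity : ((d:ℝ)/2) ≠ 0)]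
  have hgpos : 0 < Real.Gamma ((d:ℝ)/2) := Real.Gamma_pos_of_pos (by positivity)
  have hd0 : (0:ℝ) < d := by exact_mod_cast hd
  rw [measureReal_def, hball]
  unfold sSphere
  rw [hgamma]
  field_simp



lemma hasDerivAt_F1 (a : ℝ) (ha : 0 < a) (t : ℝ) :
    HasDerivAt (fun s : ℝ => Real.arctan (s / a) / (2 * a) - s / (2 * (s ^ 2 + a ^ 2)))
      (t ^ 2 / (t ^ 2 + a ^ 2) ^ 2) t := by
  have hden : t ^ 2 + a ^ 2 > 0 := by positivity
  have h1 : HasDerivAt (fun s : ℝ => s / a) (1 / a) t := by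
    simpa using (hasDerivAt_id t).div_const a
  have h2 : HasDerivAt (fun s : ℝ => Real.arctan (s / a))
      (1 / (1 + (t / a) ^ 2) * (1 / a)) t := by
    have := (Real.hasDerivAt_arctan (t / a)).comp t h1
    simp at this
    exact this.congr_deriv (by simp)
  have h3 := h2.div_const (2 * a)
  have h4 : HasDerivAt (fun s : ℝ => 2 * (s ^ 2 + a ^ 2)) (2 * (2 * t)) t := by
    have := ((hasDerivAt_pow 2 t).add_const (a ^ 2)).const_mul (2:ℝ)
    simpa using this
  have h5 : HasDerivAt (fun s : ℝ => s / (2 * (s ^ 2 + a ^ 2)))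
      ((1 * (2 * (t ^ 2 + a ^ 2)) - t * (2 * (2 * t))) / (2 * (t ^ 2 + a ^ 2)) ^ 2) t :=
    (hasDerivAt_id t).div h4 (by positivity)
  have h6 := h3.sub h5
  refine h6.congr_deriv ?_
  have ha2 : (1 + (t / a) ^ 2) = (t ^ 2 + a ^ 2) / a ^ 2 := by field_simp; ring
  rw [ha2]
  field_simp
  ring

lemma tendsto_F1 (a : ℝ) (ha : 0 < a) :
    Filter.Tendsto (fun s : ℝ => Real.arctan (s / a) / (2 * a) - s / (2 * (s ^ 2 + a ^ 2)))
      Filter.atTop (nhds (Real.pi / (4 * a))) := by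
  have h1 : Filter.Tendsto (fun s : ℝ => Real.arctan (s / a)) Filter.atTop
      (nhds (Real.pi / 2)) := by
    have := Real.tendsto_arctan_atTop.mono_right nhdsWithin_le_nhds
    exact this.comp (Filter.tendsto_id.atTop_div_const ha)
  have h2 : Filter.Tendsto (fun s : ℝ => Real.arctan (s / a) / (2 * a)) Filter.atTop
      (nhds (Real.pi / 2 / (2 * a))) := h1.div_const _
  have h3 : Filter.Tendsto (fun s : ℝ => s / (2 * (s ^ 2 + a ^ 2))) Filter.atTop (nhds 0) := by
    have hup : Filter.Tendsto (fun s : ℝ => (2 * s)⁻¹) Filter.atTop (nhds 0) :=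
      tendsto_inv_atTop_zero.comp ((Filter.tendsto_id).const_mul_atTop (by norm_num : (0:ℝ) < 2))
    apply tendsto_of_tendsto_of_tendsto_of_le_of_le' (g := fun _ : ℝ => (0:ℝ))
      (h := fun s : ℝ => (2 * s)⁻¹) tendsto_const_nhds hup
    · filter_upwards [Filter.eventually_ge_atTop (1:ℝ)] with s hs
      positivity
    · filter_upwards [Filter.eventually_ge_atTop (1:ℝ)] with s hs
      rw [inv_eq_one_div, div_le_div_iff₀ (by positivity) (by positivity)]
      nlinarith
  have h4 := h2.sub h3
  have : Real.pi / 2 / (2 * a) - 0 = Real.pi / (4 * a) := by ring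
  rwa [this] at h4

lemma integrableOn_F1' (a : ℝ) (ha : 0 < a) :
    IntegrableOn (fun t : ℝ => t ^ 2 / (t ^ 2 + a ^ 2) ^ 2) (Set.Ioi 0) :=
  integrableOn_Ioi_deriv_of_nonneg' (fun t _ => hasDerivAt_F1 a ha t)
    (fun t _ => by positivity) (tendsto_F1 a ha)

lemma integral_F1 (a : ℝ) (ha : 0 < a) :
    ∫ t in Set.Ioi (0:ℝ), t ^ 2 / (t ^ 2 + a ^ 2) ^ 2 = Real.pi / (4 * a) := by
  rw [integral_Ioi_of_hasDerivAt_of_nonneg' (fun t _ => hasDerivAt_F1 a ha t)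
    (fun t _ => by positivity) (tendsto_F1 a ha)]
  simp

lemma kappa4_nonneg (d : ℕ) (m lam : ℝ) (hlam : 0 ≤ lam) (p q r : EuclideanSpace ℝ (Fin d))
    (k : ℝ) : 0 ≤ kappa4 d m lam p q r k :=
  mul_nonneg (mul_nonneg hlam (zpow_nonneg (abs_nonneg m) _)) (Real.exp_pos _).le

lemma kappa4_le (d : ℕ) (m lam : ℝ) (hm : m ≠ 0) (hlam : 0 ≤ lam)
    (p q : EuclideanSpace ℝ (Fin d)) (k : ℝ) (hk : 0 < k) :
    kappa4 d m lam p (-q) q k ≤ lam * |m| ^ ((4 : ℤ) - (d : ℤ)) *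
      Real.exp (-(2 / (k * |m| ^ ((d : ℤ) - 1)) * ‖q‖ ^ d)) := by
  unfold kappa4
  have hma : 0 < |m| := abs_pos.mpr hm
  have hC : 0 < k * |m| ^ ((d : ℤ) - 1) := by positivity
  apply mul_le_mul_of_nonneg_left _ (mul_nonneg hlam (zpow_nonneg (abs_nonneg m) _))
  apply Real.exp_le_exp.mpr
  have hsum : p + -q + q = p := neg_add_cancel_right p q
  rw [hsum, norm_neg]
  have heq : 2 / (k * |m| ^ ((d : ℤ) - 1)) * ‖q‖ ^ d
      = (2 * ‖q‖ ^ d) / (k * |m| ^ ((d : ℤ) - 1)) := by ring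
  rw [heq]
  apply neg_le_neg
  rw [div_le_div_iff_of_pos_right hC]
  have h1 : 0 ≤ ‖p‖ ^ d := pow_nonneg (norm_nonneg p) d
  have h2 : 0 ≤ |m| ^ d := pow_nonneg (abs_nonneg m) d
  linarith

noncomputable def Ff (d : ℕ) (m lam : ℝ) (h : EuclideanSpace ℝ (Fin d) → ℝ → ℝ)
    (p : EuclideanSpace ℝ (Fin d)) (k' : ℝ) (q : EuclideanSpace ℝ (Fin d)) : ℝ :=
  (Dr d q k' / (h q k' + rbar d q k') ^ 2) * kappa4 d m lam p (-q) q k'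

lemma measurable_uncurry_Ff (d : ℕ) (m lam : ℝ) (h : EuclideanSpace ℝ (Fin d) → ℝ → ℝ)
    (hmeas : Measurable (Function.uncurry h)) (p : EuclideanSpace ℝ (Fin d)) :
    Measurable (Function.uncurry (Ff d m lam h p)) := by
  have hh : Measurable fun x : ℝ × EuclideanSpace ℝ (Fin d) => h x.2 x.1 :=
    hmeas.comp (measurable_snd.prodMk measurable_fst)
  have hq0 : MeasurableSet {x : ℝ × EuclideanSpace ℝ (Fin d) | x.2 = 0} :=
    measurable_snd (measurableSet_singleton 0)
  have hDr : Measurable fun x : ℝ × EuclideanSpace ℝ (Fin d) => Dr d x.2 x.1 := by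
    unfold Dr
    apply Measurable.ite hq0
    · fun_prop
    · fun_prop
  have hrbar : Measurable fun x : ℝ × EuclideanSpace ℝ (Fin d) => rbar d x.2 x.1 := by
    unfold rbar
    apply Measurable.ite hq0
    · fun_prop
    · fun_prop
  have hkap : Measurable fun x : ℝ × EuclideanSpace ℝ (Fin d) =>
      kappa4 d m lam p (-x.2) x.2 x.1 := by
    unfold kappa4
    fun_prop
  unfold Function.uncurry Ff
  exact ((hDr.div ((hh.add hrbar).pow_const 2)).mul hkap)

theorem stmt_7 (d : ℕ) (hd : 1 ≤ d) (m lam : ℝ) (hm : m ≠ 0) (hlam : 0 ≤ lam)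
    (h : EuclideanSpace ℝ (Fin d) → ℝ → ℝ)
    (hmeas : Measurable (Function.uncurry h))
    (hlow : ∀ q : EuclideanSpace ℝ (Fin d), ∀ k : ℝ, 0 < k → m ^ 2 + ‖q‖ ^ 2 ≤ h q k) :
    ∀ (p : EuclideanSpace ℝ (Fin d)) (k : ℝ), 0 < k →
      (∀ k' : ℝ, k < k' →
        Integrable (fun q : EuclideanSpace ℝ (Fin d) =>
          (deriv (fun s => rbar d q s) k' / (h q k' + rbar d q k') ^ 2) *
            kappa4 d m lam p (-q) q k')) ∧
      IntegrableOn (fun k' : ℝ => ∫ q,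
          (deriv (fun s => rbar d q s) k' / (h q k' + rbar d q k') ^ 2) *
            kappa4 d m lam p (-q) q k') (Set.Ioi k) ∧
      m ^ 2 + ‖p‖ ^ 2 ≤ Tmap d m lam h p k ∧
      Tmap d m lam h p k ≤ m ^ 2 + ‖p‖ ^ 2 + tConst d * lam * m ^ 2 := by
  intro p k hk
  have hma : 0 < |m| := abs_pos.mpr hm
  set A : ℝ := |m| ^ ((4 : ℤ) - (d : ℤ)) with hAdef
  set C : ℝ := |m| ^ ((d : ℤ) - 1) with hCdef
  have hApos : 0 < A := zpow_pos hma _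
  have hCpos : 0 < C := zpow_pos hma _
  have hdR : (0:ℝ) < d := by exact_mod_cast hd
  set B : ℝ := lam * A * C * sSphere d / d with hBdef
  have hsS := sSphere_pos hd
  have hBnonneg : 0 ≤ B := by positivity
  -- facts for each k' > 0
  have hFeq : ∀ k' : ℝ, 0 < k' →
      (fun q : EuclideanSpace ℝ (Fin d) =>
        (deriv (fun s => rbar d q s) k' / (h q k' + rbar d q k') ^ 2) *
          kappa4 d m lam p (-q) q k') = Ff d m lam h p k' := by
    intro k' hk'
    funext q
    rw [Ff, deriv_rbar d q k' hk']
  have hF0 : ∀ k' : ℝ, 0 < k' → ∀ q, 0 ≤ Ff d m lam h p k' q := by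
    intro k' hk' q
    exact mul_nonneg (div_nonneg (Dr_nonneg d q k' hk') (sq_nonneg _))
      (kappa4_nonneg d m lam hlam _ _ _ _)
  have hdenom : ∀ k' : ℝ, 0 < k' → ∀ q : EuclideanSpace ℝ (Fin d),
      m ^ 2 + k' ^ 2 ≤ h q k' + rbar d q k' := by
    intro k' hk' q
    have h1 := hlow q k' hk'
    have h2 := rbar_add_sq d q k' hk'
    linarith
  have hmk : ∀ k' : ℝ, 0 < k' → (0:ℝ) < m ^ 2 + k' ^ 2 := by
    intro k' hk'
    have := sq_abs m
    nlinarith [hma, hk']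
  have hFle : ∀ k' : ℝ, 0 < k' → ∀ q, Ff d m lam h p k' q ≤
      (2 * k' / (m ^ 2 + k' ^ 2) ^ 2 * (lam * A)) * Real.exp (-(2 / (k' * C) * ‖q‖ ^ d)) := by
    intro k' hk' q
    have h1 : Dr d q k' / (h q k' + rbar d q k') ^ 2 ≤ 2 * k' / (m ^ 2 + k' ^ 2) ^ 2 := by
      apply div_le_div₀ (by positivity) (Dr_le d q k' hk') (by positivity)
      exact pow_le_pow_left₀ (hmk k' hk').le (hdenom k' hk' q) 2
    have h2 := kappa4_le d m lam hm hlam p q k' hk'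
    have h3 := kappa4_nonneg d m lam hlam p (-q) q k'
    have h4 : 0 ≤ Dr d q k' / (h q k' + rbar d q k') ^ 2 :=
      div_nonneg (Dr_nonneg d q k' hk') (sq_nonneg _)
    calc Ff d m lam h p k' q ≤ (2 * k' / (m ^ 2 + k' ^ 2) ^ 2) *
        (lam * A * Real.exp (-(2 / (k' * C) * ‖q‖ ^ d))) := by
          exact mul_le_mul h1 h2 h3 (by positivity)
    _ = (2 * k' / (m ^ 2 + k' ^ 2) ^ 2 * (lam * A)) * Real.exp (-(2 / (k' * C) * ‖q‖ ^ d)) := by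
          ring
  have hGint : ∀ k' : ℝ, 0 < k' → Integrable (fun q : EuclideanSpace ℝ (Fin d) =>
      (2 * k' / (m ^ 2 + k' ^ 2) ^ 2 * (lam * A)) * Real.exp (-(2 / (k' * C) * ‖q‖ ^ d))) := by
    intro k' hk'
    exact (integrable_exp_neg_norm_pow d hd _ (by positivity)).const_mul _
  have hFint : ∀ k' : ℝ, 0 < k' → Integrable (Ff d m lam h p k') := by
    intro k' hk'
    refine (hGint k' hk').mono' ?_ ?_
    · exact ((measurable_uncurry_Ff d m lam h hmeas p).of_uncurry_left).aestronglyMeasurable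
    · filter_upwards with q
      rw [Real.norm_eq_abs, abs_of_nonneg (hF0 k' hk' q)]
      exact hFle k' hk' q
  have hJle : ∀ k' : ℝ, 0 < k' →
      (∫ q, Ff d m lam h p k' q) ≤ B * (k' ^ 2 / (m ^ 2 + k' ^ 2) ^ 2) := by
    intro k' hk'
    have step := integral_mono (hFint k' hk') (hGint k' hk') (hFle k' hk')
    rw [integral_const_mul, integral_exp_neg_norm_pow_eq d hd _ (by positivity)] at step
    have heq : 2 * k' / (m ^ 2 + k' ^ 2) ^ 2 * (lam * A) * (sSphere d / (2 / (k' * C) * d))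
        = B * (k' ^ 2 / (m ^ 2 + k' ^ 2) ^ 2) := by
      rw [hBdef]
      field_simp
    rwa [heq] at step
  set J : ℝ → ℝ := fun k' => ∫ q, Ff d m lam h p k' q with hJdef
  have hIJ : Set.EqOn (fun k' : ℝ => ∫ q,
      (deriv (fun s => rbar d q s) k' / (h q k' + rbar d q k') ^ 2) *
        kappa4 d m lam p (-q) q k') J (Set.Ioi k) := by
    intro k' hk'
    simp only [hJdef]
    rw [hFeq k' (hk.trans hk'.out)]
  have hJmeas : AEStronglyMeasurable J (volume.restrict (Set.Ioi k)) :=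
    ((measurable_uncurry_Ff d m lam h hmeas p).stronglyMeasurable.integral_prod_right
      ).aestronglyMeasurable.restrict
  have hJnonneg : ∀ k' : ℝ, 0 < k' → 0 ≤ J k' := by
    intro k' hk'
    exact integral_nonneg (hF0 k' hk')
  have hBint0 : IntegrableOn (fun t : ℝ => B * (t ^ 2 / (m ^ 2 + t ^ 2) ^ 2)) (Set.Ioi 0) := by
    have h0 := integrableOn_F1' |m| hma
    simp only [sq_abs] at h0
    have h1 : IntegrableOn (fun t : ℝ => t ^ 2 / (m ^ 2 + t ^ 2) ^ 2) (Set.Ioi 0) := by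
      apply h0.congr_fun _ measurableSet_Ioi
      intro t _
      simp only
      rw [add_comm (m ^ 2) (t ^ 2)]
    exact h1.const_mul B
  have hBint : IntegrableOn (fun t : ℝ => B * (t ^ 2 / (m ^ 2 + t ^ 2) ^ 2)) (Set.Ioi k) :=
    hBint0.mono_set (Set.Ioi_subset_Ioi hk.le)
  have hJint : IntegrableOn J (Set.Ioi k) := by
    refine hBint.mono' hJmeas ?_
    rw [ae_restrict_iff' measurableSet_Ioi]
    filter_upwards with k' hk'
    have hkp := hk.trans hk'.out
    rw [Real.norm_eq_abs, abs_of_nonneg (hJnonneg k' hkp)]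
    exact hJle k' hkp
  -- the value of the outer integral
  have houter : ∫ k' in Set.Ioi k, J k' ≤ B * (Real.pi / (4 * |m|)) := by
    have s1 : ∫ k' in Set.Ioi k, J k' ≤
        ∫ k' in Set.Ioi k, B * (k' ^ 2 / (m ^ 2 + k' ^ 2) ^ 2) := by
      apply setIntegral_mono_on hJint hBint measurableSet_Ioi
      intro k' hk'
      exact hJle k' (hk.trans hk'.out)
    have s2 : ∫ k' in Set.Ioi k, B * (k' ^ 2 / (m ^ 2 + k' ^ 2) ^ 2) ≤
        ∫ k' in Set.Ioi (0:ℝ), B * (k' ^ 2 / (m ^ 2 + k' ^ 2) ^ 2) := by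
      apply setIntegral_mono_set hBint0
      · filter_upwards with t
        positivity
      · exact (Set.Ioi_subset_Ioi hk.le).eventuallyLE
    have s3 : ∫ k' in Set.Ioi (0:ℝ), B * (k' ^ 2 / (m ^ 2 + k' ^ 2) ^ 2)
        = B * (Real.pi / (4 * |m|)) := by
      rw [integral_const_mul]
      congr 1
      have h0 := integral_F1 |m| hma
      simp only [sq_abs] at h0
      rw [← h0]
      apply setIntegral_congr_fun measurableSet_Ioi
      intro t _
      simp only
      rw [add_comm (m ^ 2) (t ^ 2)]
    linarith
  have houter0 : 0 ≤ ∫ k' in Set.Ioi k, J k' :=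
    setIntegral_nonneg measurableSet_Ioi fun k' hk' => hJnonneg k' (hk.trans hk'.out)
  have hcoef : (0:ℝ) < 1 / (2 * (2 * Real.pi) ^ d) := by positivity
  have hTmap : Tmap d m lam h p k = m ^ 2 + ‖p‖ ^ 2 +
      (1 / (2 * (2 * Real.pi) ^ d)) * ∫ k' in Set.Ioi k, J k' := by
    unfold Tmap
    congr 1
    rw [setIntegral_congr_fun measurableSet_Ioi hIJ]
  -- final algebra
  have halg : (1 / (2 * (2 * Real.pi) ^ d)) * (B * (Real.pi / (4 * |m|)))
      = tConst d * lam * m ^ 2 := by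
    have hACm : A * C = m ^ 2 * |m| := by
      rw [hAdef, hCdef, ← zpow_add₀ hma.ne']
      have he : (4 - (d:ℤ)) + ((d:ℤ) - 1) = 3 := by ring
      rw [he, show (3:ℤ) = ((3:ℕ):ℤ) from rfl, zpow_natCast, pow_succ, sq_abs]
    rw [hBdef, mul_assoc lam A C, hACm, tConst]
    have hzp : (2 * Real.pi) ^ (-(d : ℤ)) = ((2 * Real.pi) ^ d)⁻¹ := by
      rw [zpow_neg, zpow_natCast]
    rw [hzp]
    have h2pi : (0:ℝ) < (2 * Real.pi) ^ d := by positivity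
    field_simp
    ring
  refine ⟨?_, ?_, ?_, ?_⟩
  · intro k' hkk'
    rw [hFeq k' (hk.trans hkk')]
    exact hFint k' (hk.trans hkk')
  · exact (hJint.congr_fun (fun k' hk' => (hIJ hk').symm) measurableSet_Ioi)
  · rw [hTmap]
    nlinarith [mul_nonneg hcoef.le houter0]
  · rw [hTmap]
    have : (1 / (2 * (2 * Real.pi) ^ d)) * (∫ k' in Set.Ioi k, J k') ≤
        (1 / (2 * (2 * Real.pi) ^ d)) * (B * (Real.pi / (4 * |m|))) :=
      mul_le_mul_of_nonneg_left houter hcoef.le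
    linarith [halg ▸ this]
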